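/- Let R be a Dedekind domain and S an overring of R. For every nonzero prime ideal 𝒫 of S, the extension of the contracted ideal equals 𝒫: (𝒫 ∩ R)S = 𝒫. -/

import Mathlib

open scoped nonZeroDivisors

section Aux

variable {R : Type*} [CommRing R] [IsDomain R] [IsDedekindDomain R]
  {K : Type*} [Field K] [Algebra R K] [IsFractionRing R K]
  {S : Subalgebra R K}

omit [IsDomain R] [IsDedekindDomain R] [IsFractionRing R K] in
private lemma hcomm (r : R) : algebraMap S K (algebraMap R S r) = algebraMap R K r :=
  (IsScalarTower.algebraMap_apply R S K r).symm

omit [IsDomain R] [IsDedekindDomain R] [IsFractionRing R K] in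
private lemma hinjSK : Function.Injective (algebraMap S K) :=
  Subtype.val_injective

/-- The contraction of a nonzero ideal of an overring is nonzero. -/
private lemma comap_ne_bot {Q : Ideal S} (hQ : Q ≠ ⊥) :
    Q.comap (algebraMap R S) ≠ ⊥ := by
  obtain ⟨s, hsQ, hs0⟩ := Submodule.exists_mem_ne_zero_of_ne_bot hQ
  obtain ⟨⟨a, b⟩, hab⟩ := IsLocalization.surj R⁰ (algebraMap S K s)
  have hb0 : (b : R) ≠ 0 := nonZeroDivisors.coe_ne_zero b
  have key : s * algebraMap R S b = algebraMap R S a := by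
    apply hinjSK
    rw [map_mul, hcomm, hcomm]
    exact hab
  have ha : a ∈ Q.comap (algebraMap R S) := by
    rw [Ideal.mem_comap, ← key]
    exact Q.mul_mem_right _ hsQ
  intro hbot
  rw [hbot] at ha
  apply hs0
  have ha0 : (a : R) = 0 := ha
  rw [ha0, map_zero] at key
  have hbS : algebraMap R S b ≠ 0 := by
    intro h
    apply hb0
    have := congrArg (algebraMap S K) h
    rw [hcomm, map_zero] at this
    exact IsFractionRing.injective R K (by simpa using this)
  exact (mul_eq_zero.mp key).resolve_right hbS

/-- Key lemma: any element of `S` can be written as `a/b` with `b` outside a given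
nonzero prime contraction. -/
private lemma exists_reduction {Q : Ideal S} (hQp : Q.IsPrime)
    (hq0 : Q.comap (algebraMap R S) ≠ ⊥) (s : S) :
    ∃ a b : R, b ∉ Q.comap (algebraMap R S) ∧ algebraMap R S b * s = algebraMap R S a := by
  set q := Q.comap (algebraMap R S) with hq
  haveI hqp : q.IsPrime := hQp.comap _
  let Rq := Localization.AtPrime q
  have hu : ∀ y : q.primeCompl, IsUnit (algebraMap R K y) := by
    rintro ⟨y, hy⟩
    refine IsUnit.mk0 _ ?_
    simp only [ne_eq, IsFractionRing.to_map_eq_zero_iff]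
    rintro rfl
    exact hy q.zero_mem
  letI : Algebra Rq K := RingHom.toAlgebra (IsLocalization.lift hu)
  haveI : IsScalarTower R Rq K :=
    IsScalarTower.of_algebraMap_eq fun x => (IsLocalization.lift_eq hu x).symm
  haveI : IsFractionRing Rq K :=
    IsFractionRing.isFractionRing_of_isDomain_of_isLocalization q.primeCompl Rq K
  haveI : IsDiscreteValuationRing Rq :=
    IsLocalization.AtPrime.isDiscreteValuationRing_of_dedekind_domain R hq0 Rq
  set x := algebraMap S K s with hx
  suffices hint : ∃ u : Rq, algebraMap Rq K u = x by
    obtain ⟨u, hux⟩ := hint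
    obtain ⟨⟨a, b⟩, hab⟩ := IsLocalization.mk'_surjective q.primeCompl u
    change IsLocalization.mk' Rq a b = u at hab
    have h1 := IsLocalization.mk'_spec Rq a b
    rw [hab] at h1
    have h2 := congrArg (algebraMap Rq K) h1
    rw [map_mul, ← IsScalarTower.algebraMap_apply, ← IsScalarTower.algebraMap_apply,
      hux] at h2
    refine ⟨a, b, b.2, ?_⟩
    apply hinjSK
    rw [map_mul, hcomm, hcomm, mul_comm]
    exact h2
  rcases eq_or_ne x 0 with hx0 | hx0
  · exact ⟨0, by rw [map_zero, hx0]⟩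
  rcases ValuationRing.isInteger_or_isInteger Rq x with ⟨u, hu'⟩ | ⟨u, hu'⟩
  · exact ⟨u, hu'⟩
  by_cases hun : IsUnit u
  · obtain ⟨v, rfl⟩ := hun
    refine ⟨(v⁻¹ : Rqˣ), ?_⟩
    have hv : algebraMap Rq K (v⁻¹ : Rqˣ) * algebraMap Rq K (v : Rqˣ) = 1 := by
      rw [← map_mul, Units.inv_mul, map_one]
    rw [hu'] at hv
    exact (mul_inv_eq_one₀ hx0).mp hv
  · exfalso
    have hmem : u ∈ IsLocalRing.maximalIdeal Rq := hun
    rw [← Localization.AtPrime.map_eq_maximalIdeal] at hmem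
    obtain ⟨⟨⟨a, ha⟩, b⟩, h1⟩ := (IsLocalization.mem_map_algebraMap_iff q.primeCompl Rq).mp hmem
    have h2 := congrArg (algebraMap Rq K) h1
    rw [map_mul, ← IsScalarTower.algebraMap_apply, ← IsScalarTower.algebraMap_apply,
      hu'] at h2
    -- h2 : x⁻¹ * algebraMap R K b = algebraMap R K a
    have h3 : algebraMap R K (b : R) = algebraMap R K a * x := by
      rw [← h2, mul_comm (x⁻¹) _, mul_assoc, inv_mul_cancel₀ hx0, mul_one]
    have h4 : algebraMap R S (b : R) = algebraMap R S a * s := by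
      apply hinjSK
      rw [map_mul, hcomm, hcomm]
      exact h3
    have hbq : (b : R) ∈ q := by
      have : algebraMap R S (b : R) ∈ Q := by
        rw [h4]; exact Q.mul_mem_right _ ha
      exact this
    exact b.2 hbq

private lemma le_of_comap_eq {Q₁ Q₂ : Ideal S} (h₁ : Q₁.IsPrime) (h₂ : Q₂.IsPrime)
    (hb : Q₁.comap (algebraMap R S) ≠ ⊥)
    (h : Q₁.comap (algebraMap R S) = Q₂.comap (algebraMap R S)) : Q₁ ≤ Q₂ := by
  intro s hs
  obtain ⟨a, b, hbq, heq⟩ := exists_reduction h₁ hb s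
  have ha1 : a ∈ Q₁.comap (algebraMap R S) := by
    rw [Ideal.mem_comap, ← heq]
    exact Q₁.mul_mem_left _ hs
  have ha2 : algebraMap R S a ∈ Q₂ := by
    rw [h] at ha1; exact ha1
  have hb2 : algebraMap R S b ∉ Q₂ := by
    intro hh
    apply hbq
    rw [h]
    exact Ideal.mem_comap.mpr hh
  have : algebraMap R S b * s ∈ Q₂ := by rw [heq]; exact ha2
  exact (h₂.mem_or_mem this).resolve_left hb2

/-- Primes of `S` with the same nonzero contraction are equal. -/
private lemma prime_eq_of_comap_eq {Q₁ Q₂ : Ideal S} (h₁ : Q₁.IsPrime) (h₂ : Q₂.IsPrime)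
    (hb : Q₁.comap (algebraMap R S) ≠ ⊥)
    (h : Q₁.comap (algebraMap R S) = Q₂.comap (algebraMap R S)) : Q₁ = Q₂ :=
  le_antisymm (le_of_comap_eq h₁ h₂ hb h)
    (le_of_comap_eq h₂ h₁ (h ▸ hb) h.symm)

end Aux

/-- Let `R` be a Dedekind domain with fraction field `K` and `S` an overring of `R`.
For every nonzero prime ideal `𝒫` of `S`, the extension of the contraction equals `𝒫`:
`(𝒫 ∩ R) S = 𝒫`. -/
theorem overring_map_comap_prime (R : Type*) [CommRing R] [IsDomain R]
    [IsDedekindDomain R] (K : Type*) [Field K] [Algebra R K] [IsFractionRing R K]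
    (S : Subalgebra R K) (P : Ideal S) (hP : P.IsPrime) (hP0 : P ≠ ⊥) :
    (P.comap (algebraMap R S)).map (algebraMap R S) = P := by
  haveI := hP
  have hp0 : P.comap (algebraMap R S) ≠ ⊥ := comap_ne_bot hP0
  haveI hpp : (P.comap (algebraMap R S)).IsPrime := hP.comap _
  have hpm : (P.comap (algebraMap R S)).IsMaximal := hpp.isMaximal hp0
  apply Ideal.eq_of_localization_maximal
  intro Q hQmax
  have hQ0 : Q ≠ ⊥ := by
    rintro rfl
    exact hP0 ((hQmax.eq_of_le hP.ne_top bot_le).symm)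
  have hq0 : Q.comap (algebraMap R S) ≠ ⊥ := comap_ne_bot hQ0
  haveI hqp : (Q.comap (algebraMap R S)).IsPrime := hQmax.isPrime.comap _
  by_cases hle : P ≤ Q
  · have hpq : P.comap (algebraMap R S) ≤ Q.comap (algebraMap R S) :=
      Ideal.comap_mono hle
    have hpq' : P.comap (algebraMap R S) = Q.comap (algebraMap R S) :=
      hpm.eq_of_le hqp.ne_top hpq
    have hPQ : P = Q := prime_eq_of_comap_eq hP hQmax.isPrime hp0 hpq'
    subst hPQ
    apply le_antisymm
    · exact Ideal.map_mono (Ideal.map_le_iff_le_comap.mpr le_rfl)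
    · rw [Ideal.map_le_iff_le_comap]
      intro s hs
      rw [Ideal.mem_comap]
      obtain ⟨a, b, hbp, heq⟩ := exists_reduction hP hp0 s
      have ha : a ∈ P.comap (algebraMap R S) := by
        rw [Ideal.mem_comap, ← heq]
        exact P.mul_mem_left _ hs
      have hbP : algebraMap R S b ∈ P.primeCompl := fun hh => hbp (Ideal.mem_comap.mpr hh)
      have hunit : IsUnit (algebraMap S (Localization.AtPrime P) (algebraMap R S b)) :=
        IsLocalization.map_units _ (⟨algebraMap R S b, hbP⟩ : P.primeCompl)
      rw [← Ideal.unit_mul_mem_iff_mem _ hunit, ← map_mul, heq]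
      exact Ideal.mem_map_of_mem _ (Ideal.mem_map_of_mem _ ha)
  · obtain ⟨z, hzP, hzQ⟩ := SetLike.not_le_iff_exists.mp hle
    have hPQ : P ≠ Q := fun h => hle (h ▸ le_rfl)
    have hpq : ¬ P.comap (algebraMap R S) ≤ Q.comap (algebraMap R S) := by
      intro h
      exact hPQ (prime_eq_of_comap_eq hP hQmax.isPrime hp0 (hpm.eq_of_le hqp.ne_top h))
    obtain ⟨x, hxp, hxq⟩ := SetLike.not_le_iff_exists.mp hpq
    have h1 : Ideal.map (algebraMap S (Localization.AtPrime Q))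
        ((P.comap (algebraMap R S)).map (algebraMap R S)) = ⊤ := by
      apply Ideal.eq_top_of_isUnit_mem _
        (Ideal.mem_map_of_mem _ (Ideal.mem_map_of_mem _ hxp))
      exact IsLocalization.map_units _
        (⟨algebraMap R S x, fun hh => hxq (Ideal.mem_comap.mpr hh)⟩ : Q.primeCompl)
    have h2 : Ideal.map (algebraMap S (Localization.AtPrime Q)) P = ⊤ := by
      apply Ideal.eq_top_of_isUnit_mem _ (Ideal.mem_map_of_mem _ hzP)
      exact IsLocalization.map_units _ (⟨z, hzQ⟩ : Q.primeCompl)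
    rw [h1, h2]
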